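/- Let K be a field and A a finite-dimensional commutative local K-algebra with maximal ideal m, such that the composite map K → A → A/m is bijective. Then A admits a Frobenius form over K if and only if the socle of A is one-dimensional as a K-vector space. -/

import Mathlib

/-- A Frobenius form on a commutative `K`-algebra `A` is a `K`-linear map `θ : A → K` such
that the `K`-linear map `A → Hom_K(A, K)` sending `a` to `b ↦ θ (a * b)` is bijective. -/
def IsFrobeniusForm {K A : Type*} [CommRing K] [CommRing A] [Algebra K A]
    (θ : A →ₗ[K] K) : Prop :=
  Function.Bijective fun a : A => θ ∘ₗ LinearMap.mulLeft K a

/-- The socle of a commutative local `K`-algebra `A`, i.e. the annihilator of the maximal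
ideal, regarded as a `K`-submodule of `A`. -/
def socleSubmodule (K A : Type*) [CommRing K] [CommRing A] [Algebra K A] [IsLocalRing A] :
    Submodule K A where
  carrier := {a : A | ∀ x ∈ IsLocalRing.maximalIdeal A, a * x = 0}
  add_mem' := by
    intro a b ha hb x hx
    rw [add_mul, ha x hx, hb x hx, add_zero]
  zero_mem' := by
    intro x hx
    rw [zero_mul]
  smul_mem' := by
    intro c a ha x hx
    rw [smul_mul_assoc, ha x hx, smul_zero]

/-- The `K`-linear map `A → Hom_K(A, K)` attached to `θ`. -/
def frobMap {K A : Type*} [CommRing K] [CommRing A] [Algebra K A] (θ : A →ₗ[K] K) :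
    A →ₗ[K] Module.Dual K A where
  toFun a := θ ∘ₗ LinearMap.mulLeft K a
  map_add' a b := by ext x; simp [add_mul]
  map_smul' c a := by ext x; simp [smul_mul_assoc]

lemma exists_mul_mem_socle {K A : Type*} [Field K] [CommRing A] [Algebra K A] [IsLocalRing A]
    [FiniteDimensional K A] (a : A) (ha : a ≠ 0) :
    ∃ x : A, a * x ≠ 0 ∧ a * x ∈ socleSubmodule K A := by
  classical
  have : IsArtinianRing A := isArtinian_of_tower K inferInstance
  obtain ⟨n, hn⟩ : IsNilpotent (IsLocalRing.maximalIdeal A) := by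
    rw [← IsLocalRing.jacobson_eq_maximalIdeal (⊥ : Ideal A) bot_ne_top]
    exact IsArtinianRing.isNilpotent_jacobson_bot
  have hP : ∃ k, ∀ x ∈ (IsLocalRing.maximalIdeal A) ^ k, a * x = 0 := by
    refine ⟨n, fun x hx => ?_⟩
    rw [hn] at hx
    rw [Ideal.zero_eq_bot, Ideal.mem_bot] at hx
    rw [hx, mul_zero]
  set k := Nat.find hP with hkdef
  have hk : ∀ x ∈ (IsLocalRing.maximalIdeal A) ^ k, a * x = 0 := Nat.find_spec hP
  have hk0 : k ≠ 0 := by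
    intro h
    have := hk 1 (by rw [h, pow_zero, Ideal.one_eq_top]; exact Submodule.mem_top)
    rw [mul_one] at this
    exact ha this
  have hlt : ¬ ∀ x ∈ (IsLocalRing.maximalIdeal A) ^ (k - 1), a * x = 0 :=
    Nat.find_min hP (Nat.sub_lt (Nat.pos_of_ne_zero hk0) one_pos)
  push_neg at hlt
  obtain ⟨x, hx, hax⟩ := hlt
  refine ⟨x, hax, fun y hy => ?_⟩
  rw [mul_assoc]
  apply hk
  have hpow : (IsLocalRing.maximalIdeal A) ^ k
      = (IsLocalRing.maximalIdeal A) ^ (k - 1) * IsLocalRing.maximalIdeal A := by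
    conv_lhs => rw [show k = (k - 1) + 1 from (Nat.succ_pred_eq_of_pos (Nat.pos_of_ne_zero hk0)).symm]
    rw [pow_succ]
  rw [hpow]
  exact Ideal.mul_mem_mul hx hy

/-- Let `K` be a field and `A` a finite-dimensional commutative local
`K`-algebra with maximal ideal `m` such that the composite `K → A → A/m` is bijective.
Then `A` admits a Frobenius form over `K` if and only if the socle of `A` is one-dimensional
as a `K`-vector space. -/
theorem stmt5 (K A : Type*) [Field K] [CommRing A] [Algebra K A] [IsLocalRing A]
    [FiniteDimensional K A]
    (hres : Function.Bijective fun c : K =>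
      Ideal.Quotient.mk (IsLocalRing.maximalIdeal A) (algebraMap K A c)) :
    (∃ θ : A →ₗ[K] K, IsFrobeniusForm θ) ↔ Module.finrank K (socleSubmodule K A) = 1 := by
  constructor
  · rintro ⟨θ, hθ⟩
    have hθ' : Function.Bijective (frobMap θ) := hθ
    -- θ restricted to the socle is injective
    have hinj : Function.Injective (θ ∘ₗ (socleSubmodule K A).subtype) := by
      rw [← LinearMap.ker_eq_bot, LinearMap.ker_eq_bot']
      rintro ⟨t, ht⟩ h0
      have h0' : θ t = 0 := h0
      have : frobMap θ t = 0 := by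
        ext b
        obtain ⟨c, hc⟩ := hres.2 (Ideal.Quotient.mk _ b)
        have hmem : b - algebraMap K A c ∈ IsLocalRing.maximalIdeal A := by
          rw [← Ideal.Quotient.eq_zero_iff_mem, map_sub,
            show (Ideal.Quotient.mk (IsLocalRing.maximalIdeal A)) (algebraMap K A c)
              = Ideal.Quotient.mk _ b from hc, sub_self]
        have : t * b = t * (b - algebraMap K A c) + c • t := by
          rw [Algebra.smul_def, mul_comm (algebraMap K A c) t]; ring
        show θ (t * b) = 0
        rw [this, ht _ hmem, zero_add, map_smul, h0', smul_zero]
      have ht0 : t = 0 := hθ'.1 (by rw [this]; exact (map_zero _).symm)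
      exact Subtype.ext ht0
    have hle : Module.finrank K (socleSubmodule K A) ≤ 1 := by
      have := LinearMap.finrank_le_finrank_of_injective hinj
      simpa using this
    have hpos : 0 < Module.finrank K (socleSubmodule K A) := by
      obtain ⟨x, hx, hmem⟩ := exists_mul_mem_socle (K := K) (1 : A) one_ne_zero
      have : Nontrivial (socleSubmodule K A) :=
        ⟨⟨⟨1 * x, hmem⟩, 0, by simp only [ne_eq, Submodule.mk_eq_zero]; exact hx⟩⟩
      exact Module.finrank_pos_iff.mpr this
    omega
  · intro h
    obtain ⟨v, hv0, hv⟩ := finrank_eq_one_iff'.mp h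
    have hvne : (v : A) ≠ 0 := fun h' => hv0 (Subtype.ext h')
    obtain ⟨φ, hφ⟩ : ∃ φ : Module.Dual K A, φ (v : A) ≠ 0 := by
      by_contra hc
      push_neg at hc
      exact hvne ((Module.forall_dual_apply_eq_zero_iff K (v : A)).mp hc)
    set θ : A →ₗ[K] K := (φ (v : A))⁻¹ • φ with hθdef
    have hθv : θ (v : A) = 1 := by
      simp [hθdef, inv_mul_cancel₀ hφ]
    refine ⟨θ, ?_⟩
    have hinj : Function.Injective (frobMap θ) := by
      rw [← LinearMap.ker_eq_bot, LinearMap.ker_eq_bot']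
      intro a h0
      by_contra ha
      obtain ⟨x, hx, hmem⟩ := exists_mul_mem_socle (K := K) a ha
      obtain ⟨c, hc⟩ := hv ⟨a * x, hmem⟩
      have hθax : θ (a * x) = 0 := by
        have := congrArg (fun f => f x) h0
        simpa [frobMap] using this
      have hcv : c • (v : A) = a * x := congrArg Subtype.val hc
      have : c = 0 := by
        have := congrArg θ hcv
        rw [map_smul, hθv, smul_eq_mul, mul_one, hθax] at this
        exact this
      rw [this, zero_smul] at hcv
      exact hx hcv.symm
    exact ⟨hinj, (LinearMap.injective_iff_surjective_of_finrank_eq_finrank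
      (Subspace.dual_finrank_eq).symm).mp hinj⟩
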